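/- arXiv:2002.11984 — 2 statements merged into one kernel-verified Lean document; each statement's English description precedes it below -/
import Mathlib

section
/- There exist positive constants C and C′ such that for every real x > 5, | Σ_{n ≤ x} (|μ|*μ)(n)/n − 1/ζ(2) | ≤ C′ · δ(x), where δ(x) = exp(−C (log x)^{3/5}/(log log x)^{1/5}). -/
open Finset

/-- `δ(x) = exp(-C (log x)^{3/5} / (log log x)^{1/5})`. -/
noncomputable def deltaFn (C x : ℝ) : ℝ :=
  Real.exp (-C * (Real.log x) ^ ((3 : ℝ) / 5) / (Real.log (Real.log x)) ^ ((1 : ℝ) / 5))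

/-- The Dirichlet convolution `|μ| * μ` evaluated at `n`. -/
def absMoebiusConvMoebius (n : ℕ) : ℤ :=
  ∑ d ∈ n.divisors, |ArithmeticFunction.moebius d| * ArithmeticFunction.moebius (n / d)

open ArithmeticFunction


/-- squarefree indicator as arithmetic function -/
def Fmu : ArithmeticFunction ℤ :=
  ⟨fun n => |moebius n|, by simp⟩

def sFn : ArithmeticFunction ℤ :=
  ⟨fun n => if Nat.sqrt n ^ 2 = n then moebius (Nat.sqrt n) else 0, by simp⟩

lemma sFn_apply (n : ℕ) : sFn n = if Nat.sqrt n ^ 2 = n then moebius (Nat.sqrt n) else 0 := rfl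

lemma sFn_sq (a : ℕ) : sFn (a ^ 2) = moebius a := by
  simp [sFn_apply, Nat.sqrt_eq']

lemma isMultiplicative_sFn : sFn.IsMultiplicative := by
  constructor
  · simp [sFn_apply]
  · intro m n hmn
    by_cases h : Nat.sqrt (m * n) ^ 2 = m * n
    · obtain ⟨a, ha⟩ : ∃ a, m = a ^ 2 :=
        exists_eq_pow_of_mul_eq_pow (by rw [Nat.isUnit_iff]; exact hmn) h.symm
      obtain ⟨b, hb⟩ : ∃ b, n = b ^ 2 :=
        exists_eq_pow_of_mul_eq_pow (by rw [Nat.isUnit_iff]; exact hmn.symm)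
          (by rw [mul_comm]; exact h.symm)
      subst ha hb
      have hab : Nat.Coprime a b := by
        have h2 := hmn
        rwa [Nat.coprime_pow_left_iff two_pos, Nat.coprime_pow_right_iff two_pos] at h2
      rw [← mul_pow, sFn_sq, sFn_sq, sFn_sq, isMultiplicative_moebius.map_mul_of_coprime hab]
    · rw [sFn_apply, if_neg h]
      by_cases hm : Nat.sqrt m ^ 2 = m
      · by_cases hn : Nat.sqrt n ^ 2 = n
        · exfalso
          apply h
          rw [← hm, ← hn, ← mul_pow, Nat.sqrt_eq']
        · rw [sFn_apply n, if_neg hn, mul_zero]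
      · rw [sFn_apply m, if_neg hm, zero_mul]

lemma abs_moebius_eq (n : ℕ) : |moebius n| = moebius n * moebius n := by
  by_cases h : Squarefree n
  · rw [moebius_apply_of_squarefree h, ← pow_add, abs_pow, abs_neg, abs_one, one_pow,
      ← two_mul, pow_mul]
    norm_num
  · rw [moebius_eq_zero_of_not_squarefree h]; rfl

lemma Fmu_apply (n : ℕ) : Fmu n = |moebius n| := rfl

lemma isMultiplicative_Fmu : Fmu.IsMultiplicative := by
  have : Fmu = ArithmeticFunction.pmul moebius moebius := by
    ext n
    rw [Fmu_apply, pmul_apply, abs_moebius_eq]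
  rw [this]
  exact isMultiplicative_moebius.pmul isMultiplicative_moebius

lemma not_sq_pow_odd {p i : ℕ} (hp : p.Prime) (hodd : Odd i) : ¬ Nat.sqrt (p ^ i) ^ 2 = p ^ i := by
  intro h
  have h2 : ((Nat.sqrt (p ^ i)) ^ 2).factorization p = i := by
    rw [h, Nat.factorization_pow, hp.factorization]
    simp
  rw [Nat.factorization_pow] at h2
  simp only [Finsupp.smul_apply, smul_eq_mul] at h2
  have := Nat.odd_iff.mp hodd
  omega

lemma sFn_prime_pow {p : ℕ} (hp : p.Prime) (i : ℕ) :
    sFn (p ^ i) = (if i = 0 then 1 else 0) + (if i = 2 then -1 else 0) := by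
  rcases Nat.even_or_odd i with he | ho
  · obtain ⟨j, hj⟩ := he
    subst hj
    rw [← two_mul, pow_mul', sFn_sq]
    match j with
    | 0 => simp
    | 1 => simpa using moebius_apply_prime hp
    | (k+2) =>
      rw [moebius_apply_prime_pow hp (by omega), if_neg (by omega), if_neg (by omega),
        if_neg (by omega)]
      simp
  · rw [sFn_apply, if_neg (not_sq_pow_odd hp ho)]
    have h0 : i ≠ 0 := by rintro rfl; simp at ho
    have h2 : i ≠ 2 := by rintro rfl; revert ho; decide
    simp [h0, h2]

lemma Fmu_eq : Fmu = sFn * ((ArithmeticFunction.zeta : ArithmeticFunction ℕ) : ArithmeticFunction ℤ) := by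
  rw [IsMultiplicative.eq_iff_eq_on_prime_powers _ isMultiplicative_Fmu _
    (isMultiplicative_sFn.mul isMultiplicative_zeta.natCast)]
  intro p i hp
  rw [coe_mul_zeta_apply, Nat.sum_divisors_prime_pow hp]
  have : ∀ x ∈ range (i + 1), sFn (p ^ x) =
      (if x = 0 then 1 else 0) + (if x = 2 then (-1 : ℤ) else 0) := fun x _ => sFn_prime_pow hp x
  rw [Finset.sum_congr rfl this, Finset.sum_add_distrib, Finset.sum_ite_eq' (range (i+1)) 0,
    Finset.sum_ite_eq' (range (i+1)) 2]
  simp only [mem_range]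
  rw [Fmu_apply]
  rcases Nat.lt_or_ge i 2 with h | h
  · interval_cases i
    · simp
    · rw [pow_one, moebius_apply_prime hp]; norm_num
  · rw [moebius_apply_prime_pow hp (by omega), if_neg (by omega)]
    have : 0 < i + 1 := by omega
    have : 2 < i + 1 := by omega
    simp_all

lemma conv_eq : Fmu * moebius = sFn := by
  rw [Fmu_eq, mul_assoc, coe_zeta_mul_moebius, mul_one]

lemma absMoebius_eq_sFn (n : ℕ) :
    (∑ d ∈ n.divisors, |moebius d| * moebius (n / d)) = sFn n := by
  rw [← conv_eq, mul_apply, Nat.sum_divisorsAntidiagonal (fun a b => Fmu a * moebius b)]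
  rfl

lemma sum_eq_sqrt_sum (N : ℕ) :
    (∑ n ∈ Icc 1 N, ((∑ d ∈ n.divisors, |moebius d| * moebius (n / d) : ℤ) : ℂ) / n)
      = ∑ a ∈ Icc 1 (Nat.sqrt N), (moebius a : ℂ) / (a : ℂ) ^ 2 := by
  have h1 : ∀ n ∈ Icc 1 N,
      ((∑ d ∈ n.divisors, |moebius d| * moebius (n / d) : ℤ) : ℂ) / n = (sFn n : ℂ) / n := by
    intro n _; rw [absMoebius_eq_sFn]
  rw [Finset.sum_congr rfl h1]
  set K := Nat.sqrt N with hKdef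
  have hsub : (Icc 1 K).image (· ^ 2) ⊆ Icc 1 N := by
    intro m hm
    simp only [mem_image, mem_Icc] at hm ⊢
    obtain ⟨a, ⟨ha1, ha2⟩, rfl⟩ := hm
    refine ⟨Nat.one_le_iff_ne_zero.mpr (pow_ne_zero _ (by omega)), ?_⟩
    calc a ^ 2 ≤ K ^ 2 := Nat.pow_le_pow_left ha2 2
      _ ≤ N := Nat.sqrt_le' N
  have hzero : ∀ n ∈ Icc 1 N, n ∉ (Icc 1 K).image (· ^ 2) → (sFn n : ℂ) / n = 0 := by
    intro n hn hnot
    have hs0 : sFn n = 0 := by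
      rw [sFn_apply]
      by_cases hsq : Nat.sqrt n ^ 2 = n
      · exfalso
        apply hnot
        simp only [mem_image, mem_Icc]
        refine ⟨Nat.sqrt n, ⟨?_, ?_⟩, hsq⟩
        · simp only [mem_Icc] at hn
          have : n ≠ 0 := by omega
          rcases Nat.eq_zero_or_pos (Nat.sqrt n) with h | h
          · exfalso; apply this; rw [← hsq, h]; ring
          · exact h
        · rw [hKdef]
          exact Nat.sqrt_le_sqrt (by simp only [mem_Icc] at hn; omega)
      · rw [if_neg hsq]
    rw [hs0, Int.cast_zero, zero_div]
  rw [← Finset.sum_subset hsub hzero,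
    Finset.sum_image (fun x _ y _ h => Nat.pow_left_injective (by norm_num) h)]
  refine Finset.sum_congr rfl fun a _ => ?_
  rw [sFn_sq]
  push_cast
  ring

/-- the Möbius L-series term at `s = 2`. -/
noncomputable def Hfun (n : ℕ) : ℂ := if n = 0 then 0 else (moebius n : ℂ) / (n : ℂ) ^ 2

lemma term_eq : LSeries.term (fun n => ((moebius n : ℤ) : ℂ)) 2 = Hfun := by
  funext n
  rw [LSeries.term_def, Hfun]
  rcases eq_or_ne n 0 with rfl | hn
  · simp
  · rw [if_neg hn, if_neg hn, show (2 : ℂ) = ((2 : ℕ) : ℂ) by norm_num, Complex.cpow_natCast]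

lemma Hfun_summable : Summable Hfun := by
  rw [← term_eq]
  exact LSeriesSummable_moebius_iff.mpr (by norm_num)

lemma zeta_inv_eq : 1 / riemannZeta 2 = ∑' n, Hfun n := by
  have h2 : (1 : ℝ) < (2 : ℂ).re := by norm_num
  have hmul := LSeries_zeta_mul_Lseries_moebius (s := 2) h2
  rw [LSeries_zeta_eq_riemannZeta h2] at hmul
  have hz := riemannZeta_ne_zero_of_one_lt_re h2
  have : 1 / riemannZeta 2 = LSeries (fun n => ((moebius n : ℤ) : ℂ)) 2 := by
    field_simp
    rw [← hmul]
  rw [this, LSeries, term_eq]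

lemma gsum_bound {K : ℕ} (hK : K ≠ 0) :
    ∑' n : ℕ, (((K + 1 + n : ℕ) : ℝ) ^ 2)⁻¹ ≤ (K : ℝ)⁻¹ := by
  have hgsum : Summable fun n : ℕ => (((K + 1 + n : ℕ) : ℝ) ^ 2)⁻¹ := by
    have := (Real.summable_one_div_nat_pow (p := 2)).mpr (by norm_num)
    simp only [one_div] at this
    have h2 := (summable_nat_add_iff (K + 1)).mpr this
    refine h2.congr fun n => by rw [add_comm n (K + 1)]
  refine Summable.tsum_le_of_sum_le hgsum fun s => ?_
  set M := s.sup _root_.id + 1 with hM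
  have hsub : s ⊆ range M := fun n hn => by
    simp only [mem_range, hM]
    exact Nat.lt_succ_of_le (Finset.le_sup (f := _root_.id) hn)
  calc ∑ n ∈ s, (((K + 1 + n : ℕ) : ℝ) ^ 2)⁻¹
      ≤ ∑ n ∈ range M, (((K + 1 + n : ℕ) : ℝ) ^ 2)⁻¹ :=
        Finset.sum_le_sum_of_subset_of_nonneg hsub (fun _ _ _ => by positivity)
    _ = ∑ i ∈ Ico (K + 1) (K + 1 + M), ((i : ℝ) ^ 2)⁻¹ := by
        rw [Finset.sum_Ico_eq_sum_range]
        simp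
    _ = ∑ i ∈ Ioc K (K + M), ((i : ℝ) ^ 2)⁻¹ := by
        refine Finset.sum_congr ?_ fun _ _ => rfl
        ext i; simp only [mem_Ico, mem_Ioc]; omega
    _ ≤ (K : ℝ)⁻¹ - ((K + M : ℕ) : ℝ)⁻¹ := sum_Ioc_inv_sq_le_sub hK (Nat.le_add_right _ _)
    _ ≤ (K : ℝ)⁻¹ := by
        have : (0 : ℝ) ≤ ((K + M : ℕ) : ℝ)⁻¹ := by positivity
        linarith

lemma tail_bound {K : ℕ} (hK : K ≠ 0) :
    ‖(∑ a ∈ Icc 1 K, (moebius a : ℂ) / (a : ℂ) ^ 2) - 1 / riemannZeta 2‖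
      ≤ (K : ℝ)⁻¹ := by
  rw [zeta_inv_eq, ← Summable.sum_add_tsum_nat_add (K + 1) Hfun_summable]
  have hr : ∑ n ∈ range (K + 1), Hfun n = ∑ a ∈ Icc 1 K, (moebius a : ℂ) / (a : ℂ) ^ 2 := by
    rw [show range (K + 1) = insert 0 (Icc 1 K) by ext x; simp; omega,
      Finset.sum_insert (by simp)]
    rw [show Hfun 0 = 0 from rfl, zero_add]
    exact Finset.sum_congr rfl fun a ha => by
      rw [Hfun, if_neg (by simp only [mem_Icc] at ha; omega)]
  rw [hr]
  have hnormsum : Summable fun n : ℕ => ‖Hfun (n + (K + 1))‖ :=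
    ((summable_nat_add_iff (K + 1)).mpr Hfun_summable).norm
  calc ‖∑ a ∈ Icc 1 K, (moebius a : ℂ) / (a : ℂ) ^ 2 -
        (∑ a ∈ Icc 1 K, (moebius a : ℂ) / (a : ℂ) ^ 2 + ∑' n, Hfun (n + (K + 1)))‖
      = ‖∑' n, Hfun (n + (K + 1))‖ := by
        rw [sub_add_cancel_left, norm_neg]
    _ ≤ ∑' n, ‖Hfun (n + (K + 1))‖ := norm_tsum_le_tsum_norm hnormsum
    _ ≤ ∑' n : ℕ, (((K + 1 + n : ℕ) : ℝ) ^ 2)⁻¹ := by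
        refine Summable.tsum_le_tsum (fun n => ?_) hnormsum ?_
        · rw [Hfun, if_neg (by omega), norm_div, norm_pow, Complex.norm_natCast,
            show (K + 1 + n : ℕ) = (n + (K + 1) : ℕ) from by omega,
            div_le_iff₀ (by positivity), inv_mul_cancel₀ (by positivity)]
          rw [Complex.norm_intCast]
          exact_mod_cast abs_moebius_le_one
        · have := (Real.summable_one_div_nat_pow (p := 2)).mpr (by norm_num)
          simp only [one_div] at this
          have h2 := (summable_nat_add_iff (K + 1)).mpr this
          exact h2.congr fun n => by rw [add_comm n (K + 1)]
    _ ≤ (K : ℝ)⁻¹ := gsum_bound hK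

noncomputable def Cconst : ℝ := (Real.log (Real.log 5)) ^ ((1 : ℝ) / 5) / 2

lemma log5_gt_one : (1 : ℝ) < Real.log 5 := by
  rw [Real.lt_log_iff_exp_lt (by norm_num)]
  calc Real.exp 1 < 2.7182818286 := Real.exp_one_lt_d9
    _ < 5 := by norm_num

lemma aconst_pos : 0 < Real.log (Real.log 5) := Real.log_pos log5_gt_one

lemma Cconst_pos : 0 < Cconst := by
  have := aconst_pos
  unfold Cconst
  positivity

lemma delta_lower {x : ℝ} (hx : 5 < x) : x ^ (-(1 / 2) : ℝ) ≤ deltaFn Cconst x := by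
  have hx0 : (0 : ℝ) < x := by linarith
  set L := Real.log x with hL
  set LL := Real.log L with hLL
  set a := Real.log (Real.log 5) with ha
  have hL5 : Real.log 5 ≤ L := Real.log_le_log (by norm_num) (le_of_lt hx)
  have hL1 : (1 : ℝ) < L := lt_of_lt_of_le log5_gt_one hL5
  have haLL : a ≤ LL := Real.log_le_log (by linarith [log5_gt_one]) hL5
  have ha0 : 0 < a := aconst_pos
  have hLL0 : 0 < LL := lt_of_lt_of_le ha0 haLL
  have h1 : L ^ ((3 : ℝ) / 5) ≤ L := by
    calc L ^ ((3 : ℝ) / 5) ≤ L ^ (1 : ℝ) :=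
        Real.rpow_le_rpow_of_exponent_le hL1.le (by norm_num)
      _ = L := Real.rpow_one L
  have h2 : a ^ ((1 : ℝ) / 5) ≤ LL ^ ((1 : ℝ) / 5) :=
    Real.rpow_le_rpow ha0.le haLL (by norm_num)
  have ha5 : 0 < a ^ ((1 : ℝ) / 5) := Real.rpow_pos_of_pos ha0 _
  have hLL5 : 0 < LL ^ ((1 : ℝ) / 5) := Real.rpow_pos_of_pos hLL0 _
  have key : Cconst * L ^ ((3 : ℝ) / 5) / LL ^ ((1 : ℝ) / 5) ≤ 1 / 2 * L := by
    have hnum : Cconst * L ^ ((3 : ℝ) / 5) ≤ Cconst * L :=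
      mul_le_mul_of_nonneg_left h1 Cconst_pos.le
    calc Cconst * L ^ ((3 : ℝ) / 5) / LL ^ ((1 : ℝ) / 5)
        ≤ Cconst * L / a ^ ((1 : ℝ) / 5) := div_le_div₀ (mul_nonneg Cconst_pos.le (by linarith)) hnum ha5 h2
      _ = 1 / 2 * L := by
          rw [Cconst, ← ha]
          field_simp
  have hexp : -Cconst * L ^ ((3 : ℝ) / 5) / LL ^ ((1 : ℝ) / 5) = 
      -(Cconst * L ^ ((3 : ℝ) / 5) / LL ^ ((1 : ℝ) / 5)) := by ring
  rw [deltaFn, hexp, Real.rpow_def_of_pos hx0]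
  apply Real.exp_le_exp.mpr
  rw [← hL]
  nlinarith [key]



theorem abs_moebius_conv_moebius_div_sum :
    ∃ C > 0, ∃ C' > 0, ∀ x : ℝ, x > 5 →
      ‖(∑ n ∈ Finset.Icc 1 ⌊x⌋₊, (absMoebiusConvMoebius n : ℂ) / n)
        - 1 / riemannZeta 2‖
      ≤ C' * deltaFn C x := by
  refine ⟨Cconst, Cconst_pos, 2, by norm_num, fun x hx => ?_⟩
  have hx0 : (0 : ℝ) < x := by linarith
  set N := ⌊x⌋₊ with hN
  have hN5 : 5 ≤ N := Nat.le_floor (by exact_mod_cast hx.le)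
  set K := Nat.sqrt N with hK
  have hK2 : 2 ≤ K := by rw [hK, Nat.le_sqrt]; omega
  have hsum : (∑ n ∈ Finset.Icc 1 N, (absMoebiusConvMoebius n : ℂ) / n)
      = ∑ a ∈ Icc 1 K, (moebius a : ℂ) / (a : ℂ) ^ 2 := by
    rw [hK, ← sum_eq_sqrt_sum N]
    rfl
  rw [hsum]
  refine (tail_bound (K := K) (by omega)).trans ?_
  have hxK : Real.sqrt x ≤ 2 * K := by
    have hlt : N < (K + 1) ^ 2 := Nat.lt_succ_sqrt' N
    have h2 : x < ((K + 1 : ℕ) : ℝ) ^ 2 := by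
      calc x < (N : ℝ) + 1 := Nat.lt_floor_add_one x
        _ ≤ ((K + 1 : ℕ) : ℝ) ^ 2 := by exact_mod_cast Nat.succ_le_of_lt hlt
    have hsq : Real.sqrt x < ((K + 1 : ℕ) : ℝ) := by
      rw [show ((K + 1 : ℕ) : ℝ) = Real.sqrt (((K + 1 : ℕ) : ℝ) ^ 2) from
        (Real.sqrt_sq (by positivity)).symm]
      exact Real.sqrt_lt_sqrt hx0.le h2
    have h3 : (2 : ℝ) ≤ (K : ℝ) := by exact_mod_cast hK2
    push_cast at hsq
    linarith
  have hsx : 0 < Real.sqrt x := Real.sqrt_pos.mpr hx0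
  have hKpos : (0 : ℝ) < (K : ℝ) := by exact_mod_cast (by omega : 0 < K)
  have step1 : ((K : ℝ))⁻¹ ≤ 2 / Real.sqrt x := by
    rw [inv_eq_one_div, div_le_div_iff₀ hKpos hsx]
    linarith
  refine step1.trans ?_
  have step2 : 2 / Real.sqrt x = 2 * x ^ (-(1 / 2) : ℝ) := by
    rw [Real.sqrt_eq_rpow, Real.rpow_neg hx0.le]
    ring
  rw [step2]
  exact mul_le_mul_of_nonneg_left (delta_lower hx) (by norm_num)
end

section
/- Assume the Riemann Hypothesis, that all nontrivial zeros ρ = 1/2 + iγ of ζ are simple (ζ′(ρ) ≠ 0), and that there is a constant c > 0 such that Σ_{0 < γ ≤ T} 1/|ζ′(1/2 + iγ)| ≤ c·T (log T)^{1/4} for all T ≥ 14, where the sum runs over ordinates γ of nontrivial zeros of ζ. Then Σ_{0 < γ ≤ T} 1/(γ · |ζ′(1/2 + iγ)|) = O((log T)^{5/4}) as T → ∞, the sum again running over ordinates of nontrivial zeros. -/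
open Finset

namespace ZeroOrdinateAux

noncomputable def g (t : ℝ) : ℝ :=
  1 / ‖deriv riemannZeta (1 / 2 + t * Complex.I)‖

noncomputable def w (t : ℝ) : ℝ :=
  1 / (t * ‖deriv riemannZeta (1 / 2 + t * Complex.I)‖)

def Z (T : ℝ) : Set ℝ :=
  {t : ℝ | 0 < t ∧ t ≤ T ∧ riemannZeta (1 / 2 + t * Complex.I) = 0}

lemma g_nonneg (t : ℝ) : 0 ≤ g t := by
  unfold g; positivity

lemma Z_mono {a b : ℝ} (h : a ≤ b) : Z a ⊆ Z b := by
  intro t ⟨h1, h2, h3⟩; exact ⟨h1, h2.trans h, h3⟩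

lemma g_eq {t : ℝ} (ht : 0 < t) : g t = t * w t := by
  unfold g w
  simp only [one_div, mul_inv, ← mul_assoc, mul_inv_cancel₀ ht.ne', one_mul]

lemma w_nonneg {t : ℝ} (ht : 0 ≤ t) : 0 ≤ w t := by
  unfold w; positivity

lemma summable_incl {f : ℝ → ℝ} {s t : Set ℝ} (h : s ⊆ t)
    (hf : Summable (fun x : t => f x)) : Summable (fun x : s => f x) :=
  hf.comp_injective (Set.inclusion_injective h)

lemma tsum_mono_incl {f : ℝ → ℝ} (hnn : ∀ x, 0 ≤ f x) {s t : Set ℝ} (h : s ⊆ t)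
    (hs : Summable (fun x : s => f x)) (ht : Summable (fun x : t => f x)) :
    (∑' x : s, f x) ≤ ∑' x : t, f x :=
  hs.tsum_le_tsum_of_inj (Set.inclusion h) (Set.inclusion_injective h)
    (fun _ _ => hnn _) (fun _ => le_rfl) ht

lemma tsum_union_disj {f : ℝ → ℝ} {s t : Set ℝ} (hd : Disjoint s t)
    (hs : Summable (fun x : s => f x)) (ht : Summable (fun x : t => f x)) :
    (∑' x : ↥(s ∪ t), f x) = (∑' x : s, f x) + ∑' x : t, f x :=
  hs.tsum_union_disjoint hd ht

end ZeroOrdinateAux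

open ZeroOrdinateAux in
set_option maxHeartbeats 1000000 in
theorem zero_ordinate_weighted_sum_bound
    (hRH : RiemannHypothesis)
    (hsimple : ∀ ρ : ℂ, riemannZeta ρ = 0 → 0 < ρ.re → ρ.re < 1 →
      deriv riemannZeta ρ ≠ 0)
    (hGH : ∃ c > 0, ∀ T : ℝ, T ≥ 14 →
      (∑' γ : {t : ℝ // 0 < t ∧ t ≤ T ∧ riemannZeta (1 / 2 + t * Complex.I) = 0},
        1 / ‖deriv riemannZeta (1 / 2 + (γ : ℝ) * Complex.I)‖)
      ≤ c * T * (Real.log T) ^ ((1 : ℝ) / 4)) :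
    ∃ C > 0, ∃ T₀ : ℝ, ∀ T : ℝ, T ≥ T₀ →
      (∑' γ : {t : ℝ // 0 < t ∧ t ≤ T ∧ riemannZeta (1 / 2 + t * Complex.I) = 0},
        1 / ((γ : ℝ) * ‖deriv riemannZeta (1 / 2 + (γ : ℝ) * Complex.I)‖))
      ≤ C * (Real.log T) ^ ((5 : ℝ) / 4) := by
  obtain ⟨c, hc, hGH⟩ := hGH
  set W₀ : ℝ := ∑' t : Z 14, w t with hW₀
  have hW₀nonneg : 0 ≤ W₀ := tsum_nonneg fun ⟨t, ht⟩ => w_nonneg ht.1.le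
  refine ⟨W₀ + 6 * c + 1, by positivity, 14, fun T hT => ?_⟩
  have hT1 : (1 : ℝ) < T := by linarith
  have hlog1 : (1 : ℝ) ≤ Real.log T := by
    rw [Real.le_log_iff_exp_le (by linarith)]
    have := Real.exp_one_lt_d9
    linarith
  have hlogpos : 0 < Real.log T := by linarith
  have hrp54 : (1 : ℝ) ≤ Real.log T ^ ((5 : ℝ) / 4) :=
    Real.one_le_rpow hlog1 (by norm_num)
  show (∑' t : Z T, w t) ≤ _
  by_cases hw : Summable (fun t : Z T => w t)
  swap
  · rw [tsum_eq_zero_of_not_summable hw]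
    positivity
  have hg : Summable (fun t : Z T => g t) := by
    apply Summable.of_nonneg_of_le (fun t => g_nonneg _) _ (hw.mul_left T)
    rintro ⟨t, ht1, ht2, ht3⟩
    simp only
    rw [g_eq ht1]
    exact mul_le_mul_of_nonneg_right ht2 (w_nonneg ht1.le)
  have hsubg : ∀ s : Set ℝ, s ⊆ Z T → Summable (fun t : s => g t) :=
    fun s hs => summable_incl hs hg
  have hsubw : ∀ s : Set ℝ, s ⊆ Z T → Summable (fun t : s => w t) :=
    fun s hs => summable_incl hs hw
  -- dyadic piece bound
  have hpiece : ∀ A B : ℝ, 14 ≤ A → B ≤ 2 * A → B ≤ T →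
      (∑' t : ↥(Z B \ Z A), w t) ≤ 2 * c * Real.log T ^ ((1:ℝ)/4) := by
    intro A B hA hB2A hBT
    have hApos : (0:ℝ) < A := by linarith
    have hrp14 : (0:ℝ) ≤ Real.log T ^ ((1:ℝ)/4) := Real.rpow_nonneg hlogpos.le _
    by_cases hAB : A ≤ B
    swap
    · have hempty : Z B \ Z A = ∅ := Set.diff_eq_empty.2 (Z_mono (le_of_not_ge hAB))
      rw [hempty]
      have h0 : (∑' t : (∅ : Set ℝ), w t) = 0 := tsum_empty
      rw [h0]
      positivity
    have hBsub : Z B ⊆ Z T := Z_mono hBT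
    have hsub : Z B \ Z A ⊆ Z T := (Set.diff_subset).trans hBsub
    have hle1 : (∑' t : ↥(Z B \ Z A), w t) ≤ ∑' t : ↥(Z B \ Z A), (1/A) * g t := by
      apply (hsubw _ hsub).tsum_le_tsum _ ((hsubg _ hsub).mul_left _)
      rintro ⟨t, ⟨ht1, ht2, ht3⟩, htA⟩
      simp only
      have htgtA : A < t := by
        by_contra hcon
        exact htA ⟨ht1, le_of_not_gt hcon, ht3⟩
      rw [g_eq ht1, ← mul_assoc]
      have h1le : (1:ℝ) ≤ 1/A * t := by
        rw [div_mul_eq_mul_div, le_div_iff₀ hApos]; linarith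
      linarith [mul_le_mul_of_nonneg_right h1le (w_nonneg ht1.le)]
    have hle2 : (∑' t : ↥(Z B \ Z A), (1/A) * g t) = (1/A) * ∑' t : ↥(Z B \ Z A), g t :=
      tsum_mul_left
    have hle3 : (∑' t : ↥(Z B \ Z A), g t) ≤ ∑' t : Z B, g t :=
      tsum_mono_incl g_nonneg Set.diff_subset (hsubg _ hsub) (hsubg _ hBsub)
    have h14B : (14:ℝ) ≤ B := le_trans hA hAB
    have hle4 : (∑' t : Z B, g t) ≤ c * B * Real.log B ^ ((1:ℝ)/4) := hGH B h14B
    have hlogB : Real.log B ^ ((1:ℝ)/4) ≤ Real.log T ^ ((1:ℝ)/4) := by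
      apply Real.rpow_le_rpow (Real.log_nonneg (by linarith)) _ (by norm_num)
      exact Real.log_le_log (by linarith) hBT
    calc (∑' t : ↥(Z B \ Z A), w t)
        ≤ (1/A) * ∑' t : ↥(Z B \ Z A), g t := by rw [← hle2]; exact hle1
      _ ≤ (1/A) * (c * B * Real.log B ^ ((1:ℝ)/4)) :=
          mul_le_mul_of_nonneg_left (le_trans hle3 hle4) (by positivity)
      _ ≤ (1/A) * (c * (2*A) * Real.log T ^ ((1:ℝ)/4)) := by
          apply mul_le_mul_of_nonneg_left _ (by positivity)
          have h1 : c * B ≤ c * (2*A) := mul_le_mul_of_nonneg_left hB2A hc.le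
          have h2 : 0 ≤ Real.log B ^ ((1:ℝ)/4) :=
            Real.rpow_nonneg (Real.log_nonneg (by linarith)) _
          calc c * B * Real.log B ^ ((1:ℝ)/4) ≤ c * (2*A) * Real.log B ^ ((1:ℝ)/4) :=
                mul_le_mul_of_nonneg_right h1 h2
            _ ≤ c * (2*A) * Real.log T ^ ((1:ℝ)/4) :=
                mul_le_mul_of_nonneg_left hlogB (by positivity)
      _ = 2 * c * Real.log T ^ ((1:ℝ)/4) := by field_simp
  -- induction over dyadic blocks
  have key : ∀ n : ℕ, (∑' t : ↥(Z (min (14 * 2 ^ n) T) \ Z 14), w t)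
      ≤ n * (2 * c * Real.log T ^ ((1:ℝ)/4)) := by
    intro n
    induction n with
    | zero =>
      have hm : min (14 * (2:ℝ) ^ (0:ℕ)) T = 14 := by
        rw [pow_zero, mul_one]; exact min_eq_left (by linarith)
      rw [hm, Set.diff_self]
      have h0 : (∑' t : (∅ : Set ℝ), w t) = 0 := tsum_empty
      rw [h0]
      simp
    | succ n ih =>
      set A : ℝ := min (14 * 2 ^ n) T with hA
      set B : ℝ := min (14 * 2 ^ (n+1)) T with hB
      have hAB : A ≤ B := min_le_min (by
        have : (14:ℝ) * 2 ^ n ≤ 14 * 2 ^ (n+1) := by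
          apply mul_le_mul_of_nonneg_left _ (by norm_num)
          exact pow_le_pow_right₀ (by norm_num) (Nat.le_succ n)
        exact this) le_rfl
      have h14A : (14:ℝ) ≤ A := le_min (by
        have : (1:ℝ) ≤ 2 ^ n := one_le_pow₀ (by norm_num)
        nlinarith) (by linarith)
      have hBT : B ≤ T := min_le_right _ _
      have hB2A : B ≤ 2 * A := by
        rcases le_total (14 * (2:ℝ) ^ n) T with h | h
        · have hAeq : A = 14 * 2 ^ n := min_eq_left h
          have hBle : B ≤ 14 * 2 ^ (n+1) := min_le_left _ _
          rw [hAeq]; rw [pow_succ] at hBle; linarith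
        · have hAeq : A = T := min_eq_right h
          rw [hAeq]; linarith
      have hsplit : Z B \ Z 14 = (Z A \ Z 14) ∪ (Z B \ Z A) := by
        ext t
        simp only [Set.mem_diff, Set.mem_union, Z, Set.mem_setOf_eq]
        constructor
        · rintro ⟨⟨h1, h2, h3⟩, h4⟩
          rcases le_or_gt t A with h5 | h5
          · exact Or.inl ⟨⟨h1, h5, h3⟩, h4⟩
          · exact Or.inr ⟨⟨h1, h2, h3⟩, fun ⟨_, h6, _⟩ => absurd h6 (not_le.2 h5)⟩
        · rintro (⟨⟨h1, h2, h3⟩, h4⟩ | ⟨⟨h1, h2, h3⟩, h4⟩)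
          · exact ⟨⟨h1, h2.trans hAB, h3⟩, h4⟩
          · exact ⟨⟨h1, h2, h3⟩, fun ⟨_, h6, _⟩ => h4 ⟨h1, h6.trans h14A, h3⟩⟩
      have hdisj : Disjoint (Z A \ Z 14) (Z B \ Z A) := by
        rw [Set.disjoint_left]
        rintro t ⟨htA, _⟩ ⟨_, htnA⟩
        exact htnA htA
      have hATle : A ≤ T := min_le_right _ _
      rw [hsplit, tsum_union_disj hdisj
        (hsubw _ ((Set.diff_subset).trans (Z_mono hATle)))
        (hsubw _ ((Set.diff_subset).trans (Z_mono hBT)))]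
      have h2 := hpiece A B h14A hB2A hBT
      push_cast
      linarith [ih]
  -- choose n with 14 * 2 ^ n ≥ T
  set n : ℕ := ⌈2 * Real.log T⌉₊ with hn
  have hnge : 2 * Real.log T ≤ n := Nat.le_ceil _
  have hnle : (n : ℝ) ≤ 3 * Real.log T := by
    have := Nat.ceil_lt_add_one (by positivity : (0:ℝ) ≤ 2 * Real.log T)
    rw [← hn] at this
    linarith
  have hTpos : (0:ℝ) < T := by linarith
  have h2n : T ≤ 14 * 2 ^ n := by
    have hlog2 : (0.6931471803 : ℝ) < Real.log 2 := Real.log_two_gt_d9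
    have h1 : Real.log T ≤ (n : ℝ) * Real.log 2 := by nlinarith
    have h2 : T ≤ (2:ℝ) ^ (n:ℝ) := by
      rw [Real.rpow_def_of_pos (by norm_num)]
      calc T = Real.exp (Real.log T) := (Real.exp_log hTpos).symm
        _ ≤ Real.exp (Real.log 2 * n) := Real.exp_le_exp.2 (by linarith)
    rw [Real.rpow_natCast] at h2
    nlinarith [pow_pos (by norm_num : (0:ℝ) < 2) n]
  have hminT : min (14 * (2:ℝ) ^ n) T = T := min_eq_right h2n
  have hkey := key n
  rw [hminT] at hkey
  -- final split
  have hZ14sub : Z 14 ⊆ Z T := Z_mono (by linarith)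
  have hsplitT : Z T = Z 14 ∪ (Z T \ Z 14) := (Set.union_diff_cancel hZ14sub).symm
  have hdisjT : Disjoint (Z 14) (Z T \ Z 14) := Set.disjoint_sdiff_right
  have hfinal : (∑' t : Z T, w t) = W₀ + ∑' t : ↥(Z T \ Z 14), w t := by
    conv_lhs => rw [hsplitT]
    rw [tsum_union_disj hdisjT (hsubw _ hZ14sub) (hsubw _ Set.diff_subset)]
  rw [hfinal]
  have hstep : (∑' t : ↥(Z T \ Z 14), w t) ≤ 6 * c * Real.log T ^ ((5:ℝ)/4) := by
    have h54 : Real.log T ^ ((5:ℝ)/4) = Real.log T * Real.log T ^ ((1:ℝ)/4) := by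
      rw [show (5:ℝ)/4 = 1 + 1/4 by norm_num, Real.rpow_add hlogpos, Real.rpow_one]
    have hrp14 : (0:ℝ) ≤ Real.log T ^ ((1:ℝ)/4) := Real.rpow_nonneg hlogpos.le _
    calc (∑' t : ↥(Z T \ Z 14), w t) ≤ n * (2 * c * Real.log T ^ ((1:ℝ)/4)) := hkey
      _ ≤ 3 * Real.log T * (2 * c * Real.log T ^ ((1:ℝ)/4)) :=
          mul_le_mul_of_nonneg_right hnle (by positivity)
      _ = 6 * c * Real.log T ^ ((5:ℝ)/4) := by rw [h54]; ring
  have hW₀le : W₀ ≤ W₀ * Real.log T ^ ((5:ℝ)/4) := le_mul_of_one_le_right hW₀nonneg hrp54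
  have hrp54' : (0:ℝ) ≤ Real.log T ^ ((5:ℝ)/4) := by linarith
  calc W₀ + (∑' t : ↥(Z T \ Z 14), w t)
      ≤ W₀ * Real.log T ^ ((5:ℝ)/4) + 6 * c * Real.log T ^ ((5:ℝ)/4) := by linarith
    _ ≤ (W₀ + 6 * c + 1) * Real.log T ^ ((5:ℝ)/4) := by nlinarith
end
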